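/- For any complex numbers z₁, z₂ there exist Eisenstein integers r₁, r₂ such that |z₁ - r₁| < 1, |z₂ - r₂| < 1, and |(z₁ - r₁) + (z₂ - r₂)| < 1. -/

import Mathlib

noncomputable def ρ : ℂ := (1 + Real.sqrt 3 * Complex.I) / 2

/-- `z` is an Eisenstein integer (as an element of `ℂ`). -/
def IsEisensteinInt (z : ℂ) : Prop := ∃ a b : ℤ, z = (a : ℂ) + (b : ℂ) * ρ

lemma ρ_re : ρ.re = 1/2 := by simp [ρ]
lemma ρ_im : ρ.im = Real.sqrt 3 / 2 := by simp [ρ]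

lemma normSq_uv (u v : ℝ) :
    ‖(u:ℂ) + (v:ℂ) * ρ‖ ^ 2 = u^2 + u*v + v^2 := by
  have h3 : Real.sqrt 3 ^ 2 = 3 := Real.sq_sqrt (by norm_num)
  rw [Complex.sq_norm, Complex.normSq_apply]
  simp [ρ_re, ρ_im, Complex.add_re, Complex.add_im, Complex.mul_re, Complex.mul_im]
  nlinarith [h3]

lemma decomp (z : ℂ) :
    z = ((z.re - z.im / Real.sqrt 3 : ℝ) : ℂ) + ((2 * z.im / Real.sqrt 3 : ℝ) : ℂ) * ρ := by
  have h3 : Real.sqrt 3 * Real.sqrt 3 = 3 := Real.mul_self_sqrt (by norm_num)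
  have h3p : Real.sqrt 3 ≠ 0 := by positivity
  apply Complex.ext
  · simp [ρ_re, Complex.add_re, Complex.mul_re, ρ_im]
    try (field_simp; ring)
  · simp [ρ_im, Complex.add_im, Complex.mul_im, ρ_re]
    field_simp

/-- Three-candidate lemma: a point of the fundamental square `[0,1/2]²` (in lattice
coordinates) is within squared distance `1/3` of one of `0, 1, ρ`. -/
lemma key_min (u v : ℝ) (hu0 : 0 ≤ u) (hu : u ≤ 1/2) (hv0 : 0 ≤ v) (hv : v ≤ 1/2) :
    u^2 + u*v + v^2 ≤ 1/3 ∨ (u-1)^2 + (u-1)*v + v^2 ≤ 1/3 ∨ u^2 + u*(v-1) + (v-1)^2 ≤ 1/3 := by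
  by_contra h
  push_neg at h
  obtain ⟨h1, h2, h3⟩ := h
  nlinarith [mul_nonneg hu0 hv0, mul_nonneg (by linarith : (0:ℝ) ≤ 1/2 - u) (by linarith : (0:ℝ) ≤ 1/2 - v), sq_nonneg (u - v), sq_nonneg (u + v - 2/3), mul_nonneg (by linarith : (0:ℝ) ≤ 1/2 - u) hv0, mul_nonneg hu0 (by linarith : (0:ℝ) ≤ 1/2 - v)]

lemma key_mixed (u v : ℝ) (hu0 : 0 ≤ u) (hu : u ≤ 1/2) (hv0 : -(1/2) ≤ v) (hv : v ≤ 0) :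
    u^2 + u*v + v^2 ≤ 1/3 := by
  nlinarith [mul_nonneg hu0 (by linarith : (0:ℝ) ≤ -v), mul_nonneg (by linarith : (0:ℝ) ≤ 1/2 - u) (by linarith : (0:ℝ) ≤ v + 1/2), sq_nonneg (u + v)]

lemma key2 (u v : ℝ) : ∃ a b : ℤ,
    (u - a)^2 + (u - a)*(v - b) + (v - b)^2 ≤ 1/3 := by
  set a0 := round u with ha0
  set b0 := round v with hb0
  have hu1 : |u - a0| ≤ 1/2 := abs_sub_round u
  have hv1 : |v - b0| ≤ 1/2 := abs_sub_round v
  rw [abs_le] at hu1 hv1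
  set u' := u - (a0:ℝ) with hu'
  set v' := v - (b0:ℝ) with hv'
  rcases le_or_gt 0 u' with hus | hus <;> rcases le_or_gt 0 v' with hvs | hvs
  · -- both nonneg
    rcases key_min u' v' hus hu1.2 hvs hv1.2 with h | h | h
    · exact ⟨a0, b0, h⟩
    · exact ⟨a0 + 1, b0, by push_cast; convert h using 2 <;> ring⟩
    · exact ⟨a0, b0 + 1, by push_cast; convert h using 2 <;> ring⟩
  · exact ⟨a0, b0, key_mixed u' v' hus hu1.2 hv1.1 (le_of_lt hvs)⟩
  · refine ⟨a0, b0, ?_⟩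
    have := key_mixed v' u' hvs hv1.2 hu1.1 (le_of_lt hus)
    nlinarith [this]
  · -- both nonpos: apply key_min to negations
    rcases key_min (-u') (-v') (by linarith) (by linarith) (by linarith) (by linarith)
      with h | h | h
    · exact ⟨a0, b0, by nlinarith [h]⟩
    · exact ⟨a0 - 1, b0, by push_cast; nlinarith [h]⟩
    · exact ⟨a0, b0 - 1, by push_cast; nlinarith [h]⟩

/-- Every complex number is within distance `1/√3` (squared distance `1/3`) of an
Eisenstein integer. -/
lemma near (z : ℂ) : ∃ r : ℂ, IsEisensteinInt r ∧ ‖z - r‖ ^ 2 ≤ 1/3 := by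
  set u0 : ℝ := z.re - z.im / Real.sqrt 3 with hu0
  set v0 : ℝ := 2 * z.im / Real.sqrt 3 with hv0
  obtain ⟨a, b, hab⟩ := key2 u0 v0
  refine ⟨(a:ℂ) + (b:ℂ) * ρ, ⟨a, b, rfl⟩, ?_⟩
  have hz : z - ((a:ℂ) + (b:ℂ) * ρ) = ((u0 - a : ℝ) : ℂ) + ((v0 - b : ℝ) : ℂ) * ρ := by
    have := decomp z
    rw [← hu0, ← hv0] at this
    rw [this]
    push_cast
    ring
  rw [hz, normSq_uv]
  exact hab

theorem stmt8 (z₁ z₂ : ℂ) :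
    ∃ r₁ r₂ : ℂ, IsEisensteinInt r₁ ∧ IsEisensteinInt r₂ ∧
      ‖z₁ - r₁‖ < 1 ∧ ‖z₂ - r₂‖ < 1 ∧
      ‖(z₁ - r₁) + (z₂ - r₂)‖ < 1 := by
  obtain ⟨r₁, hr₁, h1⟩ := near z₁
  obtain ⟨r₂, hr₂, h2⟩ := near (z₂ + (z₁ - r₁) / 2)
  refine ⟨r₁, r₂, hr₁, hr₂, ?_, ?_, ?_⟩
  all_goals {
    have hb1 : ‖z₁ - r₁‖ < 2/3 := by
      nlinarith [norm_nonneg (z₁ - r₁), h1]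
    have hb2 : ‖z₂ + (z₁ - r₁) / 2 - r₂‖ < 2/3 := by
      nlinarith [norm_nonneg (z₂ + (z₁ - r₁) / 2 - r₂), h2]
    have habs_half : ‖(z₁ - r₁) / 2‖ = ‖z₁ - r₁‖ / 2 := by
      rw [norm_div]; simp
    have tri1 : ‖z₂ - r₂‖ ≤
        ‖z₂ + (z₁ - r₁) / 2 - r₂‖ + ‖z₁ - r₁‖ / 2 := by
      have e : z₂ - r₂ = (z₂ + (z₁ - r₁) / 2 - r₂) - (z₁ - r₁) / 2 := by ring
      rw [e, ← habs_half]
      exact norm_sub_le _ _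
    have tri2 : ‖(z₁ - r₁) + (z₂ - r₂)‖ ≤
        ‖z₂ + (z₁ - r₁) / 2 - r₂‖ + ‖z₁ - r₁‖ / 2 := by
      have e : (z₁ - r₁) + (z₂ - r₂) = (z₂ + (z₁ - r₁) / 2 - r₂) + (z₁ - r₁) / 2 := by ring
      rw [e, ← habs_half]
      exact norm_add_le _ _
    linarith
  }
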